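/- For all n ≥ 3 and k ≥ 0, the set of suffixes of length f_n − 1 of elements of A_n equals the set of suffixes of length f_n − 1 of elements of A_{n+k}. -/

import Mathlib

/-- Sets of inflated random Fibonacci words: A₁ = {0}, A₂ = {1},
    Aₙ = Aₙ₋₁Aₙ₋₂ ∪ Aₙ₋₂Aₙ₋₁ for n ≥ 3 (A₀ = ∅). -/
def wordSet : ℕ → Set (List Bool)
  | 0 => ∅
  | 1 => {[false]}
  | 2 => {[true]}
  | (n + 3) => Set.image2 (· ++ ·) (wordSet (n + 2)) (wordSet (n + 1)) ∪
      Set.image2 (· ++ ·) (wordSet (n + 1)) (wordSet (n + 2))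

/-- Concatenation of sets of words: UV = {uv : u ∈ U, v ∈ V}. -/
def cat (U V : Set (List Bool)) : Set (List Bool) := Set.image2 (· ++ ·) U V

/-- W[a,b]: the set of segments wₐ…w_b (1-based indexing) of words in W. -/
def seg (W : Set (List Bool)) (a b : ℕ) : Set (List Bool) :=
  (fun w => (w.drop (a - 1)).take (b - a + 1)) '' W

/-- F(S, m): the set of all contiguous factors of length m of words in S. -/
def factorSet (S : Set (List Bool)) (m : ℕ) : Set (List Bool) :=
  {x | x.length = m ∧ ∃ w ∈ S, x <:+: w}

/-- Fₙ: the set of factors of length fₙ occurring in any inflated word. -/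
def Fn (n : ℕ) : Set (List Bool) := ⋃ m ≥ 1, factorSet (wordSet m) (Nat.fib n)

/-- Suffix of length `L` (when `L ≤ w.length`). -/
def tl (L : ℕ) (w : List Bool) : List Bool := w.drop (w.length - L)

lemma wordSet_length : ∀ n, ∀ w ∈ wordSet n, w.length = Nat.fib n := by
  intro n
  induction n using Nat.strong_induction_on with
  | _ n ih =>
    match n with
    | 0 => intro w hw; exact absurd hw (by simp [wordSet])
    | 1 => intro w hw; simp only [wordSet, Set.mem_singleton_iff] at hw; subst hw; simp
    | 2 => intro w hw; simp only [wordSet, Set.mem_singleton_iff] at hw; subst hw; simp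
    | (m + 3) =>
      intro w hw
      have h1 : Nat.fib (m + 3) = Nat.fib (m + 1) + Nat.fib (m + 2) := Nat.fib_add_two
      rcases hw with h | h <;>
        obtain ⟨u, hu, v, hv, rfl⟩ := h <;>
        · rw [List.length_append, ih _ (by omega) _ hu, ih _ (by omega) _ hv]
          omega

lemma wordSet_nonempty : ∀ n, 1 ≤ n → (wordSet n).Nonempty := by
  intro n
  induction n using Nat.strong_induction_on with
  | _ n ih =>
    match n with
    | 0 => intro h; omega
    | 1 => intro _; exact ⟨[false], rfl⟩
    | 2 => intro _; exact ⟨[true], rfl⟩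
    | (m + 3) =>
      intro _
      obtain ⟨u, hu⟩ := ih (m + 2) (by omega) (by omega)
      obtain ⟨v, hv⟩ := ih (m + 1) (by omega) (by omega)
      exact ⟨u ++ v, Or.inl ⟨u, hu, v, hv, rfl⟩⟩

lemma tl_append_ge (u v : List Bool) (L : ℕ) (h : L ≤ v.length) :
    tl L (u ++ v) = tl L v := by
  unfold tl
  rw [List.length_append, show u.length + v.length - L = u.length + (v.length - L) by omega,
    List.drop_length_add_append]

lemma tl_append_le (u v : List Bool) (L : ℕ) (h1 : v.length ≤ L) (h2 : L ≤ u.length + v.length) :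
    tl L (u ++ v) = tl (L - v.length) u ++ v := by
  unfold tl
  rw [List.length_append, List.drop_append_of_le_length (by omega)]
  congr 2
  omega

lemma img_tl_image2 (L : ℕ) (U V : Set (List Bool)) (hU : U.Nonempty)
    (hV : ∀ v ∈ V, L ≤ v.length) :
    tl L '' Set.image2 (· ++ ·) U V = tl L '' V := by
  ext x
  constructor
  · rintro ⟨w, ⟨u, hu, v, hv, rfl⟩, rfl⟩
    exact ⟨v, hv, (tl_append_ge u v L (hV v hv)).symm⟩
  · rintro ⟨v, hv, rfl⟩
    obtain ⟨u, hu⟩ := hU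
    exact ⟨u ++ v, ⟨u, hu, v, hv, rfl⟩, tl_append_ge u v L (hV v hv)⟩

lemma key : ∀ n, 1 ≤ n → ∀ k,
    tl (Nat.fib n - 1) '' wordSet (n + k) = tl (Nat.fib n - 1) '' wordSet n := by
  intro n
  induction n using Nat.strong_induction_on with
  | _ n ih =>
    match n with
    | 0 => intro h; omega
    | 1 | 2 =>
      intro _ k
      have h0 : ∀ m, 1 ≤ m → tl 0 '' wordSet m = {([] : List Bool)} := by
        intro m hm
        ext x
        constructor
        · rintro ⟨w, hw, rfl⟩
          simp [tl, List.drop_length]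
        · rintro rfl
          obtain ⟨w, hw⟩ := wordSet_nonempty m hm
          exact ⟨w, hw, by simp [tl, List.drop_length]⟩
      simp only [show Nat.fib 1 - 1 = 0 from rfl, show Nat.fib 2 - 1 = 0 from rfl]
      rw [h0 _ (by omega), h0 _ (by omega)]
    | (p + 3) =>
      intro _ k
      set L := Nat.fib (p + 3) - 1 with hL
      have fib3 : Nat.fib (p + 3) = Nat.fib (p + 1) + Nat.fib (p + 2) := Nat.fib_add_two
      have f1pos : 1 ≤ Nat.fib (p + 1) := Nat.fib_pos.mpr (by omega)
      have f2pos : 1 ≤ Nat.fib (p + 2) := Nat.fib_pos.mpr (by omega)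
      induction k using Nat.twoStepInduction with
      | zero => rfl
      | one =>
        -- the key case : suffixes of A_{n+1} equal suffixes of A_n
        show tl L '' wordSet (p + 4) = tl L '' wordSet (p + 3)
        have hws4 : wordSet (p + 4) =
            Set.image2 (· ++ ·) (wordSet (p + 3)) (wordSet (p + 2)) ∪
            Set.image2 (· ++ ·) (wordSet (p + 2)) (wordSet (p + 3)) := rfl
        rw [hws4, Set.image_union]
        have part1 : tl L '' Set.image2 (· ++ ·) (wordSet (p + 2)) (wordSet (p + 3)) =
            tl L '' wordSet (p + 3) := by
          apply img_tl_image2 _ _ _ (wordSet_nonempty _ (by omega))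
          intro v hv
          rw [wordSet_length _ v hv]
          omega
        rw [part1]
        rw [Set.union_eq_right]
        -- remains : suffixes from A_{n} A_{n-1} words lie in suffixes of A_n
        rintro x ⟨w, ⟨u, hu, v, hv, rfl⟩, rfl⟩
        have hul : u.length = Nat.fib (p + 3) := wordSet_length _ u hu
        have hvl : v.length = Nat.fib (p + 2) := wordSet_length _ v hv
        have step1 : tl L (u ++ v) = tl (Nat.fib (p + 1) - 1) u ++ v := by
          rw [tl_append_le u v L (by omega) (by omega)]
          congr 2
          omega
        -- use the induction hypothesis at level p+1 with k = 2
        have hIH := ih (p + 1) (by omega) (by omega) 2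
        have humem : tl (Nat.fib (p + 1) - 1) u ∈
            tl (Nat.fib (p + 1) - 1) '' wordSet (p + 1 + 2) := ⟨u, hu, rfl⟩
        rw [hIH] at humem
        obtain ⟨y, hy, hyu⟩ := humem
        have hyl : y.length = Nat.fib (p + 1) := wordSet_length _ y hy
        refine ⟨y ++ v, Or.inr ⟨y, hy, v, hv, rfl⟩, ?_⟩
        rw [tl_append_le y v L (by omega) (by omega), step1,
          show L - v.length = Nat.fib (p + 1) - 1 by omega, hyu]
      | more k ihk ihk1 =>
        have e1 : p + 3 + (k + 2) = p + k + 2 + 3 := by omega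
        have e2 : p + 3 + (k + 1) = p + k + 2 + 2 := by omega
        have e3 : p + 3 + k = p + k + 2 + 1 := by omega
        rw [e2] at ihk1
        rw [e3] at ihk
        rw [e1, wordSet, Set.image_union]
        have hbig : ∀ j, p + 3 ≤ j → ∀ v ∈ wordSet j, L ≤ v.length := by
          intro j hj v hv
          rw [wordSet_length _ v hv]
          have := Nat.fib_mono hj
          omega
        rw [img_tl_image2 _ _ _ (wordSet_nonempty _ (by omega)) (hbig _ (by omega)),
          img_tl_image2 _ _ _ (wordSet_nonempty _ (by omega)) (hbig _ (by omega)),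
          ihk, ihk1, Set.union_self]

theorem stmt9 (n k : ℕ) (hn : 3 ≤ n) :
    (fun w : List Bool => w.drop (w.length - (Nat.fib n - 1))) '' wordSet n =
      (fun w : List Bool => w.drop (w.length - (Nat.fib n - 1))) '' wordSet (n + k) := by
  exact (key n (by omega) k).symm
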